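/- Let G_k be the complete multipartite graph with parts V0, ..., Vk where |V_i| = 2^i. Then G_k has 2^{k+1} − 1 vertices and its 1-extendable chromatic number is at least k + 1. -/

import Mathlib

open scoped Classical

variable {V : Type*}

/-- `S` is an independent set of the graph `G`. -/
def IndepF (G : SimpleGraph V) (S : Finset V) : Prop :=
  ∀ u ∈ S, ∀ v ∈ S, ¬ G.Adj u v

/-- The independence number of `G`. -/
noncomputable def alphaN [Fintype V] (G : SimpleGraph V) : ℕ :=
  Finset.univ.powerset.sup fun S => if IndepF G S then S.card else 0

/-- `G` is 1-extendable: every vertex belongs to a maximum independent set. -/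
def OneExt [Fintype V] (G : SimpleGraph V) : Prop :=
  ∀ v : V, ∃ S : Finset V, v ∈ S ∧ IndepF G S ∧ S.card = alphaN G

/-- The 1-extendable chromatic number of `G`. -/
noncomputable def chiOneExt [Fintype V] (G : SimpleGraph V) : ℕ :=
  sInf {k | ∃ c : V → Fin k, ∀ i : Fin k, OneExt (G.induce {v | c v = i})}

/-- The join (complete sum) of two graphs. -/
def gJoin {α β : Type*} (G : SimpleGraph α) (H : SimpleGraph β) : SimpleGraph (α ⊕ β) where
  Adj u v := match u, v with
    | Sum.inl u, Sum.inl v => G.Adj u v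
    | Sum.inr u, Sum.inr v => H.Adj u v
    | Sum.inl _, Sum.inr _ => True
    | Sum.inr _, Sum.inl _ => True
  symm := ⟨by rintro (u|u) (v|v) h <;> simp_all [SimpleGraph.adj_comm]⟩
  loopless := ⟨by rintro (u|u) h <;> simp_all⟩

/-- The complete multipartite graph with parts of sizes 1, 2, 4, ..., 2^k. -/
def multipartitePow (k : ℕ) : SimpleGraph (Σ i : Fin (k + 1), Fin (2 ^ (i : ℕ))) where
  Adj a b := a.1 ≠ b.1
  symm := ⟨fun _ _ h => h.symm⟩
  loopless := ⟨fun _ h => h rfl⟩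


lemma indep_card_le_alphaN [Fintype V] (G : SimpleGraph V) (S : Finset V)
    (hS : IndepF G S) : S.card ≤ alphaN G := by
  have h := Finset.le_sup (f := fun S => if IndepF G S then S.card else 0)
    (Finset.mem_powerset.mpr (Finset.subset_univ S))
  simp only [if_pos hS] at h
  exact h

lemma key_subset_sum {ι : Type*} (s : ι → ℕ) (k : ℕ)
    (h : ∀ i ≤ k, ∃ A : Finset ι, ∑ j ∈ A, s j = 2 ^ i) :
    ∃ T : Finset ι, k + 1 ≤ T.card ∧ ∑ j ∈ T, s j ≤ 2 ^ (k + 1) - 1 := by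
  induction k with
  | zero =>
    obtain ⟨A, hA⟩ := h 0 le_rfl
    refine ⟨A, ?_, by omega⟩
    rcases Finset.eq_empty_or_nonempty A with rfl | hne
    · simp at hA
    · exact Finset.card_pos.mpr hne
  | succ k ih =>
    obtain ⟨T, hTc, hTs⟩ := ih (fun i hi => h i (le_trans hi (Nat.le_succ k)))
    obtain ⟨A, hA⟩ := h (k + 1) le_rfl
    have hnot : ¬ A ⊆ T := by
      intro hsub
      have := Finset.sum_le_sum_of_subset hsub (f := s)
      have h1 : (1 : ℕ) ≤ 2 ^ (k + 1) := Nat.one_le_two_pow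
      omega
    obtain ⟨a, haA, haT⟩ := Finset.not_subset.mp hnot
    have hsa : s a ≤ 2 ^ (k + 1) := hA ▸ Finset.single_le_sum (fun _ _ => Nat.zero_le _) haA
    refine ⟨insert a T, ?_, ?_⟩
    · rw [Finset.card_insert_of_notMem haT]; omega
    · rw [Finset.sum_insert haT]
      have h1 : (1 : ℕ) ≤ 2 ^ (k + 1) := Nat.one_le_two_pow
      have h2 : 2 ^ (k + 1 + 1) = 2 ^ (k + 1) + 2 ^ (k + 1) := by ring
      omega

lemma multipartitePow_lower (k m : ℕ)
    (c : (Σ i : Fin (k + 1), Fin (2 ^ (i : ℕ))) → Fin m)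
    (hc : ∀ j : Fin m, OneExt ((multipartitePow k).induce {v | c v = j})) :
    k + 1 ≤ m := by
  set s : Fin m → ℕ := fun j => alphaN ((multipartitePow k).induce {v | c v = j}) with hs
  have hkey : ∀ i : ℕ, i ≤ k → ∃ A : Finset (Fin m), ∑ j ∈ A, s j = 2 ^ i := by
    intro i hi
    set i' : Fin (k + 1) := ⟨i, by omega⟩ with hi'
    set part : Finset (Σ i : Fin (k + 1), Fin (2 ^ (i : ℕ))) :=
      Finset.univ.filter (fun v => v.1 = i') with hpartdef
    have hpart : part.card = 2 ^ i := by
      have himg : part = Finset.univ.image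
          (fun x : Fin (2 ^ (i' : ℕ)) =>
            (⟨i', x⟩ : Σ i : Fin (k + 1), Fin (2 ^ (i : ℕ)))) := by
        ext v
        rcases v with ⟨i2, x⟩
        simp only [hpartdef, Finset.mem_filter, Finset.mem_univ, true_and,
          Finset.mem_image]
        constructor
        · intro hv
          subst hv
          exact ⟨x, rfl⟩
        · rintro ⟨y, hy⟩
          exact (congrArg Sigma.fst hy).symm
      rw [himg, Finset.card_image_of_injective _ sigma_mk_injective]
      simp
      rfl
    set Q : Fin m → Finset (Σ i : Fin (k + 1), Fin (2 ^ (i : ℕ))) :=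
      fun j => part.filter (fun v => c v = j) with hQ
    have hsum : ∑ j ∈ Finset.univ, (Q j).card = 2 ^ i := by
      rw [← hpart]
      exact (Finset.card_eq_sum_card_fiberwise
        (f := c) (t := Finset.univ) (fun x _ => Finset.mem_univ _)).symm
    have hsame : ∀ j : Fin m,
        ∀ S : Finset ↥{v : (Σ i : Fin (k + 1), Fin (2 ^ (i : ℕ))) | c v = j},
        IndepF ((multipartitePow k).induce {v | c v = j}) S →
        ∀ u ∈ S, ∀ w ∈ S,
          (u : Σ i : Fin (k + 1), Fin (2 ^ (i : ℕ))).1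
            = (w : Σ i : Fin (k + 1), Fin (2 ^ (i : ℕ))).1 := by
      intro j S hS u hu w hw
      by_contra hne
      exact hS u hu w hw hne
    have hQs : ∀ j : Fin m, (Q j).Nonempty → (Q j).card = s j := by
      intro j hex
      obtain ⟨v, hv⟩ := hex
      simp only [hQ, hpartdef, Finset.mem_filter, Finset.mem_univ, true_and] at hv
      obtain ⟨hv1, hv2⟩ := hv
      have hv' : v ∈ {x : (Σ i : Fin (k + 1), Fin (2 ^ (i : ℕ))) | c x = j} := hv2
      obtain ⟨S, hvS, hSind, hScard⟩ := hc j ⟨v, hv'⟩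
      apply le_antisymm
      · -- Q j card ≤ s j
        set S' : Finset ↥{x : (Σ i : Fin (k + 1), Fin (2 ^ (i : ℕ))) | c x = j} :=
          Finset.univ.filter
            (fun u => (u : Σ i : Fin (k + 1), Fin (2 ^ (i : ℕ))).1 = i') with hS'
        have hS'ind : IndepF ((multipartitePow k).induce {v | c v = j}) S' := by
          intro u hu w hw hadj
          simp only [hS', Finset.mem_filter, Finset.mem_univ, true_and] at hu hw
          have hne : (u : Σ i : Fin (k + 1), Fin (2 ^ (i : ℕ))).1
              ≠ (w : Σ i : Fin (k + 1), Fin (2 ^ (i : ℕ))).1 := hadj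
          exact hne (hu.trans hw.symm)
        have himg2 : Q j = S'.image Subtype.val := by
          ext x
          simp only [hQ, hpartdef, hS', Finset.mem_filter, Finset.mem_univ, true_and,
            Finset.mem_image, Subtype.exists]
          constructor
          · rintro ⟨h1, h2⟩
            exact ⟨x, h2, h1, rfl⟩
          · rintro ⟨a, ha, h1, rfl⟩
            exact ⟨h1, ha⟩
        have hcard : (Q j).card = S'.card := by
          rw [himg2, Finset.card_image_of_injective _ Subtype.val_injective]
        rw [hcard]
        exact indep_card_le_alphaN _ _ hS'ind
      · -- s j ≤ Q j card
        show alphaN _ ≤ _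
        rw [← hScard]
        have hsub : S.image Subtype.val ⊆ Q j := by
          intro x hx
          simp only [Finset.mem_image] at hx
          obtain ⟨u, hu, rfl⟩ := hx
          simp only [hQ, hpartdef, Finset.mem_filter, Finset.mem_univ, true_and]
          refine ⟨?_, u.2⟩
          have heq := hsame j S hSind u hu ⟨v, hv'⟩ hvS
          rw [heq]
          exact hv1
        calc S.card = (S.image Subtype.val).card :=
              (Finset.card_image_of_injective _ Subtype.val_injective).symm
          _ ≤ (Q j).card := Finset.card_le_card hsub
    set A : Finset (Fin m) := Finset.univ.filter (fun j => (Q j).Nonempty) with hA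
    refine ⟨A, ?_⟩
    have hAeq : ∑ j ∈ A, s j = ∑ j ∈ A, (Q j).card := by
      apply Finset.sum_congr rfl
      intro j hj
      simp only [hA, Finset.mem_filter] at hj
      exact (hQs j hj.2).symm
    rw [hAeq, ← hsum]
    apply Finset.sum_subset (Finset.subset_univ A)
    intro j _ hj
    simp only [hA, Finset.mem_filter, Finset.mem_univ, true_and] at hj
    rw [Finset.not_nonempty_iff_eq_empty.mp hj, Finset.card_empty]
  obtain ⟨T, hTc, _⟩ := key_subset_sum s k hkey
  calc k + 1 ≤ T.card := hTc
    _ ≤ Finset.univ.card := Finset.card_le_univ T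
    _ = m := by simp

lemma multipartitePow_mem (k : ℕ) :
    (k + 1) ∈ {m | ∃ c : (Σ i : Fin (k + 1), Fin (2 ^ (i : ℕ))) → Fin m,
      ∀ i : Fin m, OneExt ((multipartitePow k).induce {v | c v = i})} := by
  refine ⟨fun v => v.1, fun i => ?_⟩
  intro v
  refine ⟨Finset.univ, Finset.mem_univ _, ?_, ?_⟩
  · intro u _ w _ hadj
    have h1 : (u : Σ i : Fin (k + 1), Fin (2 ^ (i : ℕ))).1 = i := u.2
    have h2 : (w : Σ i : Fin (k + 1), Fin (2 ^ (i : ℕ))).1 = i := w.2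
    exact (show (u : Σ i : Fin (k + 1), Fin (2 ^ (i : ℕ))).1
      ≠ (w : Σ i : Fin (k + 1), Fin (2 ^ (i : ℕ))).1 from hadj) (h1.trans h2.symm)
  · apply le_antisymm
    · apply indep_card_le_alphaN
      intro u _ w _ hadj
      have h1 : (u : Σ i : Fin (k + 1), Fin (2 ^ (i : ℕ))).1 = i := u.2
      have h2 : (w : Σ i : Fin (k + 1), Fin (2 ^ (i : ℕ))).1 = i := w.2
      exact (show (u : Σ i : Fin (k + 1), Fin (2 ^ (i : ℕ))).1
        ≠ (w : Σ i : Fin (k + 1), Fin (2 ^ (i : ℕ))).1 from hadj) (h1.trans h2.symm)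
    · apply Finset.sup_le
      intro S _
      split
      · exact Finset.card_le_univ S
      · exact Nat.zero_le _

/-- The graph with parts of sizes 2^0, ..., 2^k has 2^(k+1) - 1 vertices and
1-extendable chromatic number at least k + 1. -/
theorem multipartitePow_card_and_chi (k : ℕ) :
    Fintype.card (Σ i : Fin (k + 1), Fin (2 ^ (i : ℕ))) = 2 ^ (k + 1) - 1 ∧
      k + 1 ≤ chiOneExt (multipartitePow k) := by
  constructor
  · rw [Fintype.card_sigma]
    have : ∀ n : ℕ, ∑ i : Fin n, Fintype.card (Fin (2 ^ (i : ℕ))) = 2 ^ n - 1 := by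
      intro n
      induction n with
      | zero => simp
      | succ n ih =>
        rw [Fin.sum_univ_castSucc]
        simp only [Fin.coe_castSucc, Fin.val_last] at *
        rw [ih]
        have : (1 : ℕ) ≤ 2 ^ n := Nat.one_le_two_pow
        simp only [Fintype.card_fin]
        have h2 : 2 ^ (n + 1) = 2 ^ n + 2 ^ n := by ring
        omega
    exact this (k + 1)
  · apply le_csInf ⟨k + 1, multipartitePow_mem k⟩
    rintro m ⟨c, hcm⟩
    exact multipartitePow_lower k m c hcm
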